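/- The left B-module maps f^{-2}, f^{-1}, f^0 constitute a morphism of complexes lifting right multiplication by z: namely d^{-1}∘f^{-1} = f^0∘d^{-1} as maps B⊗V → B, and d^{-2}∘f^{-2} = f^{-1}∘d^{-2} as maps B⊗kr → B⊗V. -/

import Mathlib

/-!
STATEMENT 6: The left B-module maps f⁻², f⁻¹, f⁰ constitute a morphism of
complexes lifting right multiplication by z: d⁻¹∘f⁻¹ = f⁰∘d⁻¹ as maps B⊗V → B,
and d⁻²∘f⁻² = f⁻¹∘d⁻² as maps B⊗kr → B⊗V (where B⊗kr is identified with the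
free module B via its generator 1⊗r).
-/

open TensorProduct Matrix

noncomputable section

variable (k : Type) [Field k] (n : ℕ)

/-- The standard basis of `V = k^n`. -/
def x (i : Fin n) : Fin n → k := Pi.single i 1

/-- `V̂ = V ⊕ k·z`. -/
abbrev Vhat (k : Type) [Field k] (n : ℕ) := (Fin n → k) × k

/-- The inclusion `V → V̂`. -/
def inc : (Fin n → k) →ₗ[k] Vhat k n := LinearMap.inl k (Fin n → k) k

/-- The extra degree-one generator `z ∈ V̂`. -/
def zv : Vhat k n := (0, 1)

/-- The multiplication embedding `V̂ ⊗ V̂ → T(V̂)`. -/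
def emb2 : (Vhat k n) ⊗[k] (Vhat k n) →ₗ[k] TensorAlgebra k (Vhat k n) :=
  LinearMap.mul' k (TensorAlgebra k (Vhat k n)) ∘ₗ
    TensorProduct.map (TensorAlgebra.ι k) (TensorAlgebra.ι k)

/-- The multiplication embedding `V ⊗ V → T(V)`. -/
def embV : (Fin n → k) ⊗[k] (Fin n → k) →ₗ[k] TensorAlgebra k (Fin n → k) :=
  LinearMap.mul' k (TensorAlgebra k (Fin n → k)) ∘ₗ
    TensorProduct.map (TensorAlgebra.ι k) (TensorAlgebra.ι k)

variable (M : Matrix (Fin n) (Fin n) k)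

/-- The relation `r = Σ m_ij x_i ⊗ x_j` as an element of `T(V)`. -/
def rTV : TensorAlgebra k (Fin n → k) :=
  ∑ i : Fin n, ∑ j : Fin n,
    M i j • (TensorAlgebra.ι k (x k n i) * TensorAlgebra.ι k (x k n j))

/-- The relation `r` viewed inside `T(V̂)`. -/
def rhat : TensorAlgebra k (Vhat k n) :=
  ∑ i : Fin n, ∑ j : Fin n,
    M i j • (TensorAlgebra.ι k (inc k n (x k n i)) * TensorAlgebra.ι k (inc k n (x k n j)))

variable (δ₀ : (Fin n → k) →ₗ[k] (Fin n → k) ⊗[k] (Fin n → k))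

/-- The Ore relation `r_i = z⊗x_i − x_i⊗z − δ(x_i)` inside `T(V̂)`. -/
def relz (i : Fin n) : TensorAlgebra k (Vhat k n) :=
  TensorAlgebra.ι k (zv k n) * TensorAlgebra.ι k (inc k n (x k n i))
    - TensorAlgebra.ι k (inc k n (x k n i)) * TensorAlgebra.ι k (zv k n)
    - emb2 k n (TensorProduct.map (inc k n) (inc k n) (δ₀ (x k n i)))

/-- The defining relations of `B = T(V̂)/⟨r, r₁, …, r_n⟩`. -/
def OreRel (a b : TensorAlgebra k (Vhat k n)) : Prop :=
  (a = rhat k n M ∨ ∃ i : Fin n, a = relz k n δ₀ i) ∧ b = 0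

/-- `B = A[z;δ̄] ≅ T(V̂)/⟨r, r₁, …, r_n⟩`. -/
abbrev B := RingQuot (OreRel k n M δ₀)

/-- The projection `π : T(V̂) → B`. -/
def πB : TensorAlgebra k (Vhat k n) →ₐ[k] B k n M δ₀ :=
  RingQuot.mkAlgHom k (OreRel k n M δ₀)

/-- `u_i = Σ_s m_si x_s`, so that `r = Σ_i u_i ⊗ x_i`. -/
def u (i : Fin n) : Fin n → k := ∑ s : Fin n, M s i • x k n s

/-- The image of `z` in `B`. -/
def zB : B k n M δ₀ := πB k n M δ₀ (TensorAlgebra.ι k (zv k n))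

/-! ### Auxiliary machinery -/

lemma embV_tmul (a b : Fin n → k) :
    embV k n (a ⊗ₜ[k] b) = TensorAlgebra.ι k a * TensorAlgebra.ι k b := by
  simp [embV, LinearMap.mul'_apply]

lemma emb2_tmul (a b : Vhat k n) :
    emb2 k n (a ⊗ₜ[k] b) = TensorAlgebra.ι k a * TensorAlgebra.ι k b := by
  simp [emb2, LinearMap.mul'_apply]

lemma πB_relz (i : Fin n) : πB k n M δ₀ (relz k n δ₀ i) = 0 := by
  have hrel : OreRel k n M δ₀ (relz k n δ₀ i) 0 := ⟨Or.inr ⟨i, rfl⟩, rfl⟩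
  have h := RingQuot.mkAlgHom_rel (s := OreRel k n M δ₀) k hrel
  simpa [πB] using h

/-- commutation relation in `B`: `z·x̄ᵢ = x̄ᵢ·z + Σⱼ ȳᵢⱼ·x̄ⱼ`. -/
lemma comm_zX (y : Fin n → Fin n → (Fin n → k))
    (hy : ∀ i, δ₀ (x k n i) = ∑ j : Fin n, (y i j) ⊗ₜ (x k n j)) (i : Fin n) :
    zB k n M δ₀ * πB k n M δ₀ (TensorAlgebra.ι k (inc k n (x k n i)))
      = πB k n M δ₀ (TensorAlgebra.ι k (inc k n (x k n i))) * zB k n M δ₀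
        + ∑ j : Fin n, πB k n M δ₀ (TensorAlgebra.ι k (inc k n (y i j)))
            * πB k n M δ₀ (TensorAlgebra.ι k (inc k n (x k n j))) := by
  have h0 := πB_relz k n M δ₀ i
  rw [relz, hy i] at h0
  simp only [_root_.map_sum, TensorProduct.map_tmul, emb2_tmul, _root_.map_sub,
    _root_.map_mul] at h0
  rw [sub_sub] at h0
  have := sub_eq_zero.mp h0
  simpa [zB] using this

/-- The state space for the "keep track of the last tensor factor" representation. -/
abbrev NN := B k n M δ₀ × (B k n M δ₀ ⊗[k] (Fin n → k))

/-- Action of a letter `v`: `(b, t) ↦ (b·x̄ᵥ, b ⊗ v)`. -/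
def Lmap (v : Fin n → k) : NN k n M δ₀ →ₗ[k] NN k n M δ₀ :=
  LinearMap.prod
    ((LinearMap.mulRight k (πB k n M δ₀ (TensorAlgebra.ι k (inc k n v)))) ∘ₗ
      LinearMap.fst k _ _)
    (((TensorProduct.mk k (B k n M δ₀) (Fin n → k)).flip v) ∘ₗ LinearMap.fst k _ _)

lemma Lmap_apply (v : Fin n → k) (p : NN k n M δ₀) :
    Lmap k n M δ₀ v p
      = (p.1 * πB k n M δ₀ (TensorAlgebra.ι k (inc k n v)), p.1 ⊗ₜ[k] v) := rfl

lemma Lmap_add (v w : Fin n → k) :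
    Lmap k n M δ₀ (v + w) = Lmap k n M δ₀ v + Lmap k n M δ₀ w := by
  apply LinearMap.ext; intro p
  simp [Lmap_apply, _root_.map_add, mul_add, TensorProduct.tmul_add, Prod.ext_iff]

lemma Lmap_smul (c : k) (v : Fin n → k) :
    Lmap k n M δ₀ (c • v) = c • Lmap k n M δ₀ v := by
  apply LinearMap.ext; intro p
  simp [Lmap_apply, _root_.map_smul, mul_smul_comm, TensorProduct.tmul_smul, Prod.ext_iff]

/-- `v ↦ op (Lmap v)`, linearly. -/
def Lhom : (Fin n → k) →ₗ[k] (Module.End k (NN k n M δ₀))ᵐᵒᵖ where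
  toFun v := MulOpposite.op (Lmap k n M δ₀ v)
  map_add' v w := by
    rw [Lmap_add, MulOpposite.op_add]
  map_smul' c v := by
    rw [Lmap_smul, MulOpposite.op_smul, RingHom.id_apply]

/-- The induced algebra morphism on the tensor algebra. -/
def θmap : TensorAlgebra k (Fin n → k) →ₐ[k] (Module.End k (NN k n M δ₀))ᵐᵒᵖ :=
  TensorAlgebra.lift k (Lhom k n M δ₀)

/-- The linear "extract the last factor" map `T(V) → B ⊗ V`. -/
def Φ : TensorAlgebra k (Fin n → k) →ₗ[k] B k n M δ₀ ⊗[k] (Fin n → k) :=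
  (LinearMap.snd k _ _) ∘ₗ
    (LinearMap.applyₗ ((1 : B k n M δ₀), (0 : B k n M δ₀ ⊗[k] (Fin n → k)))) ∘ₗ
    ((MulOpposite.opLinearEquiv k).symm.toLinearMap) ∘ₗ (θmap k n M δ₀).toLinearMap

lemma Φ_triple (a b c : Fin n → k) :
    Φ k n M δ₀ (TensorAlgebra.ι k a * TensorAlgebra.ι k b * TensorAlgebra.ι k c)
      = (πB k n M δ₀ (TensorAlgebra.ι k (inc k n a))
          * πB k n M δ₀ (TensorAlgebra.ι k (inc k n b))) ⊗ₜ[k] c := by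
  simp [Φ, θmap, _root_.map_mul, TensorAlgebra.lift_ι_apply, Lhom, MulOpposite.unop_mul,
    Module.End.mul_apply, Lmap_apply, LinearMap.coe_mk, AddHom.coe_mk]

/-- Composite `V → B`, `v ↦ π(ι(inc v))`. -/
def ξmap : (Fin n → k) →ₗ[k] B k n M δ₀ :=
  (πB k n M δ₀).toLinearMap ∘ₗ (TensorAlgebra.ι k : _ →ₗ[k] _) ∘ₗ (inc k n)

lemma ξmap_apply (v : Fin n → k) :
    ξmap k n M δ₀ v = πB k n M δ₀ (TensorAlgebra.ι k (inc k n v)) := rfl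

/-- The key identity in `B ⊗ V` obtained by applying `Φ` to `δ(r) = 0`. -/
lemma K2identity
    (δ : TensorAlgebra k (Fin n → k) →ₗ[k] TensorAlgebra k (Fin n → k))
    (hLeib : ∀ a b, δ (a * b) = δ a * b + a * δ b)
    (hδι : ∀ v : Fin n → k, δ (TensorAlgebra.ι k v) = embV k n (δ₀ v))
    (hδr : δ (rTV k n M) = 0)
    (y : Fin n → Fin n → (Fin n → k))
    (hy : ∀ i, δ₀ (x k n i) = ∑ j : Fin n, (y i j) ⊗ₜ (x k n j)) :
    (∑ i : Fin n, ∑ j : Fin n, ∑ l : Fin n, M i j •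
        ((πB k n M δ₀ (TensorAlgebra.ι k (inc k n (y i l)))
          * πB k n M δ₀ (TensorAlgebra.ι k (inc k n (x k n l)))) ⊗ₜ[k] x k n j))
      + (∑ i : Fin n, ∑ j : Fin n, ∑ l : Fin n, M i j •
        ((πB k n M δ₀ (TensorAlgebra.ι k (inc k n (x k n i)))
          * πB k n M δ₀ (TensorAlgebra.ι k (inc k n (y j l)))) ⊗ₜ[k] x k n l)) = 0 := by
  have h1 : δ (rTV k n M) = ∑ i : Fin n, ∑ j : Fin n, M i j •
      ((∑ l : Fin n, TensorAlgebra.ι k (y i l) * TensorAlgebra.ι k (x k n l))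
          * TensorAlgebra.ι k (x k n j)
        + TensorAlgebra.ι k (x k n i)
          * (∑ l : Fin n, TensorAlgebra.ι k (y j l) * TensorAlgebra.ι k (x k n l))) := by
    rw [rTV, _root_.map_sum]
    refine Finset.sum_congr rfl fun i _ => ?_
    rw [_root_.map_sum]
    refine Finset.sum_congr rfl fun j _ => ?_
    rw [_root_.map_smul, hLeib, hδι, hδι, hy i, hy j, _root_.map_sum, _root_.map_sum]
    simp only [embV_tmul]
  have h2 : Φ k n M δ₀ (∑ i : Fin n, ∑ j : Fin n, M i j •
      ((∑ l : Fin n, TensorAlgebra.ι k (y i l) * TensorAlgebra.ι k (x k n l))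
          * TensorAlgebra.ι k (x k n j)
        + TensorAlgebra.ι k (x k n i)
          * (∑ l : Fin n, TensorAlgebra.ι k (y j l) * TensorAlgebra.ι k (x k n l)))) = 0 := by
    rw [← h1, hδr, _root_.map_zero]
  simp only [Finset.sum_mul, Finset.mul_sum, ← mul_assoc, _root_.map_sum, _root_.map_smul,
    _root_.map_add, Φ_triple] at h2
  simpa only [smul_add, Finset.smul_sum, Finset.sum_add_distrib] using h2

set_option maxHeartbeats 1000000 in
set_option synthInstance.maxHeartbeats 100000 in
theorem lifting_complex_morphism
    (hM : IsUnit M.det) (hMat : Mᵀ = -M)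
    (δ : TensorAlgebra k (Fin n → k) →ₗ[k] TensorAlgebra k (Fin n → k))
    (hLeib : ∀ a b, δ (a * b) = δ a * b + a * δ b)
    (hδι : ∀ v : Fin n → k, δ (TensorAlgebra.ι k v) = embV k n (δ₀ v))
    (hδr : δ (rTV k n M) = 0)
    (y : Fin n → Fin n → (Fin n → k))
    (hy : ∀ i, δ₀ (x k n i) = ∑ j : Fin n, (y i j) ⊗ₜ (x k n j))
    -- the left B-module maps of the two complexes
    (d1 : B k n M δ₀ ⊗[k] (Fin n → k) →ₗ[B k n M δ₀] B k n M δ₀)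
    (hd1 : ∀ v : Fin n → k,
      d1 ((1 : B k n M δ₀) ⊗ₜ v) = πB k n M δ₀ (TensorAlgebra.ι k (inc k n v)))
    (d2 : B k n M δ₀ →ₗ[B k n M δ₀] B k n M δ₀ ⊗[k] (Fin n → k))
    (hd2 : d2 1 = ∑ i : Fin n,
      (πB k n M δ₀ (TensorAlgebra.ι k (inc k n (u k n M i)))) ⊗ₜ (x k n i))
    (f0 : B k n M δ₀ →ₗ[B k n M δ₀] B k n M δ₀)
    (hf0 : f0 1 = zB k n M δ₀)
    (f1 : B k n M δ₀ ⊗[k] (Fin n → k) →ₗ[B k n M δ₀] B k n M δ₀ ⊗[k] (Fin n → k))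
    (hf1 : ∀ i : Fin n,
      f1 ((1 : B k n M δ₀) ⊗ₜ x k n i)
        = zB k n M δ₀ ⊗ₜ x k n i
          - ∑ j : Fin n,
              (πB k n M δ₀ (TensorAlgebra.ι k (inc k n (y i j)))) ⊗ₜ x k n j)
    (f2 : B k n M δ₀ →ₗ[B k n M δ₀] B k n M δ₀)
    (hf2 : f2 1 = zB k n M δ₀) :
    d1 ∘ₗ f1 = f0 ∘ₗ d1 ∧ d2 ∘ₗ f2 = f1 ∘ₗ d2 := by
  classical
  -- abbreviations (as plain `have`-free terms)
  -- generalized forms of the structure maps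
  have hd1' : ∀ (bb : B k n M δ₀) (v : Fin n → k),
      d1 (bb ⊗ₜ[k] v) = bb * πB k n M δ₀ (TensorAlgebra.ι k (inc k n v)) := by
    intro bb v
    have h : (bb ⊗ₜ[k] v : B k n M δ₀ ⊗[k] (Fin n → k))
        = bb • ((1 : B k n M δ₀) ⊗ₜ[k] v) := by
      rw [TensorProduct.smul_tmul', smul_eq_mul, mul_one]
    rw [h, _root_.map_smul, hd1, smul_eq_mul]
  have hf0' : ∀ bb : B k n M δ₀, f0 bb = bb * zB k n M δ₀ := by
    intro bb
    conv_lhs => rw [show bb = bb • (1 : B k n M δ₀) by rw [smul_eq_mul, mul_one]]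
    rw [_root_.map_smul, hf0, smul_eq_mul]
  have hf2' : ∀ bb : B k n M δ₀, f2 bb = bb * zB k n M δ₀ := by
    intro bb
    conv_lhs => rw [show bb = bb • (1 : B k n M δ₀) by rw [smul_eq_mul, mul_one]]
    rw [_root_.map_smul, hf2, smul_eq_mul]
  have hf1' : ∀ (bb : B k n M δ₀) (i : Fin n),
      f1 (bb ⊗ₜ[k] x k n i)
        = (bb * zB k n M δ₀) ⊗ₜ[k] x k n i
          - ∑ j : Fin n,
              (bb * πB k n M δ₀ (TensorAlgebra.ι k (inc k n (y i j)))) ⊗ₜ[k] x k n j := by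
    intro bb i
    have h : (bb ⊗ₜ[k] x k n i : B k n M δ₀ ⊗[k] (Fin n → k))
        = bb • ((1 : B k n M δ₀) ⊗ₜ[k] x k n i) := by
      rw [TensorProduct.smul_tmul', smul_eq_mul, mul_one]
    rw [h, _root_.map_smul, hf1 i, smul_sub, Finset.smul_sum]
    simp only [TensorProduct.smul_tmul', smul_eq_mul]
  have hcomm := comm_zX k n M δ₀ y hy
  constructor
  · -- first identity
    have hbase : ∀ (bb : B k n M δ₀) (i : Fin n),
        d1 (f1 (bb ⊗ₜ[k] x k n i)) = f0 (d1 (bb ⊗ₜ[k] x k n i)) := by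
      intro bb i
      rw [hf1' bb i, _root_.map_sub, _root_.map_sum]
      simp only [hd1', hf0']
      -- use commutation relation
      have : (bb * zB k n M δ₀)
            * πB k n M δ₀ (TensorAlgebra.ι k (inc k n (x k n i)))
          = bb * (πB k n M δ₀ (TensorAlgebra.ι k (inc k n (x k n i))) * zB k n M δ₀)
            + ∑ j : Fin n,
                (bb * πB k n M δ₀ (TensorAlgebra.ι k (inc k n (y i j))))
                  * πB k n M δ₀ (TensorAlgebra.ι k (inc k n (x k n j))) := by
        rw [mul_assoc, hcomm i, mul_add, Finset.mul_sum]
        simp only [mul_assoc]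
      rw [this, add_sub_cancel_right, ← mul_assoc]
    apply LinearMap.ext
    intro t
    induction t using TensorProduct.induction_on with
    | zero => simp only [LinearMap.comp_apply, LinearMap.map_zero]
    | add s t hs ht =>
      simp only [LinearMap.comp_apply] at hs ht ⊢
      rw [LinearMap.map_add, LinearMap.map_add, LinearMap.map_add, LinearMap.map_add, hs, ht]
    | tmul b v =>
      have hv : v = ∑ i : Fin n, v i • x k n i := by
        have h1 : ∀ i, v i • x k n i = Pi.single i (v i) := by
          intro i
          rw [x, ← Pi.single_smul, smul_eq_mul, mul_one]
        simp only [h1]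
        exact (Finset.univ_sum_single v).symm
      have hdecomp : (b ⊗ₜ[k] v : B k n M δ₀ ⊗[k] (Fin n → k))
          = ∑ i : Fin n, (v i • b) ⊗ₜ[k] x k n i := by
        conv_lhs => rw [hv]
        rw [TensorProduct.tmul_sum]
        exact Finset.sum_congr rfl fun i _ => (TensorProduct.smul_tmul (v i) b (x k n i)).symm
      simp only [LinearMap.comp_apply, hdecomp, _root_.map_sum]
      exact Finset.sum_congr rfl fun i _ => hbase _ i
  · -- second identity
    -- expansion of u
    have hU : ∀ p : Fin n, πB k n M δ₀ (TensorAlgebra.ι k (inc k n (u k n M p)))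
        = ∑ s : Fin n, M s p • πB k n M δ₀ (TensorAlgebra.ι k (inc k n (x k n s))) := by
      intro p
      rw [show πB k n M δ₀ (TensorAlgebra.ι k (inc k n (u k n M p)))
          = ξmap k n M δ₀ (u k n M p) from rfl, u, _root_.map_sum]
      simp only [_root_.map_smul, ξmap_apply]
    have hcommU : ∀ p : Fin n,
        zB k n M δ₀ * πB k n M δ₀ (TensorAlgebra.ι k (inc k n (u k n M p)))
          = πB k n M δ₀ (TensorAlgebra.ι k (inc k n (u k n M p))) * zB k n M δ₀
            + ∑ s : Fin n, ∑ j : Fin n, M s p •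
                (πB k n M δ₀ (TensorAlgebra.ι k (inc k n (y s j)))
                  * πB k n M δ₀ (TensorAlgebra.ι k (inc k n (x k n j)))) := by
      intro p
      rw [hU p, Finset.mul_sum, Finset.sum_mul, ← Finset.sum_add_distrib]
      refine Finset.sum_congr rfl fun s _ => ?_
      rw [mul_smul_comm, smul_mul_assoc, hcomm s, smul_add, Finset.smul_sum]
    have key : d2 (f2 1) = f1 (d2 1) := by
      rw [hf2' 1, one_mul]
      -- LHS
      have hL : d2 (zB k n M δ₀) = ∑ p : Fin n,
          (zB k n M δ₀ * πB k n M δ₀ (TensorAlgebra.ι k (inc k n (u k n M p))))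
            ⊗ₜ[k] x k n p := by
        conv_lhs => rw [show zB k n M δ₀ = zB k n M δ₀ • (1 : B k n M δ₀) by
          rw [smul_eq_mul, mul_one]]
        rw [_root_.map_smul, hd2, Finset.smul_sum]
        simp only [TensorProduct.smul_tmul', smul_eq_mul]
      -- RHS
      have hR : f1 (d2 1) = ∑ p : Fin n,
          ((πB k n M δ₀ (TensorAlgebra.ι k (inc k n (u k n M p))) * zB k n M δ₀)
              ⊗ₜ[k] x k n p
            - ∑ j : Fin n,
                (πB k n M δ₀ (TensorAlgebra.ι k (inc k n (u k n M p)))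
                  * πB k n M δ₀ (TensorAlgebra.ι k (inc k n (y p j)))) ⊗ₜ[k] x k n j) := by
        rw [hd2, _root_.map_sum]
        exact Finset.sum_congr rfl fun p _ => hf1' _ p
      rw [hL, hR]
      simp only [hcommU, add_smul, TensorProduct.add_tmul, Finset.sum_add_distrib,
        Finset.sum_sub_distrib]
      simp only [sub_eq_add_neg, Finset.sum_add_distrib]
      congr 1
      rw [Finset.sum_neg_distrib (G := B k n M δ₀ ⊗[k] (Fin n → k))]
      -- remains: Σ_p (Σ_s Σ_j M s p • (Y s j * X j)) ⊗ x p
      --        = - Σ_p Σ_j (U p * Y p j) ⊗ x j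
      have hA : (∑ p : Fin n, (∑ s : Fin n, ∑ j : Fin n, M s p •
            (πB k n M δ₀ (TensorAlgebra.ι k (inc k n (y s j)))
              * πB k n M δ₀ (TensorAlgebra.ι k (inc k n (x k n j))))) ⊗ₜ[k] x k n p)
          = ∑ i : Fin n, ∑ j : Fin n, ∑ l : Fin n, M i j •
              ((πB k n M δ₀ (TensorAlgebra.ι k (inc k n (y i l)))
                * πB k n M δ₀ (TensorAlgebra.ι k (inc k n (x k n l)))) ⊗ₜ[k] x k n j) := by
        have e1 : ∀ p : Fin n, (∑ s : Fin n, ∑ j : Fin n, M s p •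
              (πB k n M δ₀ (TensorAlgebra.ι k (inc k n (y s j)))
                * πB k n M δ₀ (TensorAlgebra.ι k (inc k n (x k n j))))) ⊗ₜ[k] x k n p
            = ∑ s : Fin n, ∑ j : Fin n, M s p •
              ((πB k n M δ₀ (TensorAlgebra.ι k (inc k n (y s j)))
                * πB k n M δ₀ (TensorAlgebra.ι k (inc k n (x k n j)))) ⊗ₜ[k] x k n p) := by
          intro p
          rw [TensorProduct.sum_tmul]
          refine Finset.sum_congr rfl fun s _ => ?_
          rw [TensorProduct.sum_tmul]
          refine Finset.sum_congr rfl fun j _ => ?_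
          rw [TensorProduct.smul_tmul']
        simp only [e1]
        exact Finset.sum_comm
      have hB : (∑ p : Fin n, ∑ j : Fin n,
            (πB k n M δ₀ (TensorAlgebra.ι k (inc k n (u k n M p)))
              * πB k n M δ₀ (TensorAlgebra.ι k (inc k n (y p j)))) ⊗ₜ[k] x k n j)
          = ∑ i : Fin n, ∑ j : Fin n, ∑ l : Fin n, M i j •
              ((πB k n M δ₀ (TensorAlgebra.ι k (inc k n (x k n i)))
                * πB k n M δ₀ (TensorAlgebra.ι k (inc k n (y j l)))) ⊗ₜ[k] x k n l) := by
        have step : ∀ p j : Fin n,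
            (πB k n M δ₀ (TensorAlgebra.ι k (inc k n (u k n M p)))
              * πB k n M δ₀ (TensorAlgebra.ι k (inc k n (y p j)))) ⊗ₜ[k] x k n j
            = ∑ t : Fin n, M t p •
                ((πB k n M δ₀ (TensorAlgebra.ι k (inc k n (x k n t)))
                  * πB k n M δ₀ (TensorAlgebra.ι k (inc k n (y p j)))) ⊗ₜ[k] x k n j) := by
          intro p j
          rw [hU p, Finset.sum_mul, TensorProduct.sum_tmul]
          exact Finset.sum_congr rfl fun t _ => by
            rw [smul_mul_assoc, TensorProduct.smul_tmul']
        simp only [step]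
        -- now: Σ_p Σ_j Σ_t F t p j = Σ_t Σ_p Σ_j F t p j
        have e2 : (∑ p : Fin n, ∑ j : Fin n, ∑ t : Fin n, M t p •
              ((πB k n M δ₀ (TensorAlgebra.ι k (inc k n (x k n t)))
                * πB k n M δ₀ (TensorAlgebra.ι k (inc k n (y p j)))) ⊗ₜ[k] x k n j))
            = ∑ p : Fin n, ∑ t : Fin n, ∑ j : Fin n, M t p •
              ((πB k n M δ₀ (TensorAlgebra.ι k (inc k n (x k n t)))
                * πB k n M δ₀ (TensorAlgebra.ι k (inc k n (y p j)))) ⊗ₜ[k] x k n j) :=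
          Finset.sum_congr rfl fun p _ => Finset.sum_comm
        rw [e2]
        exact Finset.sum_comm
      rw [hA, hB]
      exact eq_neg_of_add_eq_zero_left (K2identity k n M δ₀ δ hLeib hδι hδr y hy)
    apply LinearMap.ext
    intro b
    have hb1 : (d2 ∘ₗ f2) b = b • d2 (f2 1) := by
      rw [LinearMap.comp_apply, ← _root_.map_smul, ← _root_.map_smul, smul_eq_mul, mul_one]
    have hb2 : (f1 ∘ₗ d2) b = b • f1 (d2 1) := by
      rw [LinearMap.comp_apply, ← _root_.map_smul, ← _root_.map_smul, smul_eq_mul, mul_one]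
    rw [hb1, hb2, key]

end
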